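/- Let $U_g^{a_1,a_2}$ ($a_1 \ge a_2 \ge 1$) be the unicyclic graph of order $n = q^2 + r$ ($1 \le r \le 2q+1$) obtained from a cycle of length $g$ by attaching two pendant paths of orders $a_1,a_2$ at one vertex. If $3 \le g \le r$ or $a_1 \ge q^2 - \lfloor g/2 \rfloor$, then $b(U_g^{a_1,a_2}) \ge q+1$. -/

import Mathlib

open SimpleGraph

/-- A burning sequence of length `k` (0-indexed: `x 0, …, x (k-1)`):
the distance conditions and the covering condition. -/
def IsBurnSeq {V : Type*} (G : SimpleGraph V) (k : ℕ) (x : ℕ → V) : Prop :=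
  (∀ i j : ℕ, i < j → j < k → (↑(j - i) : ℕ∞) ≤ G.edist (x i) (x j)) ∧
  (∀ v : V, ∃ i < k, G.edist (x i) v ≤ (↑(k - 1 - i) : ℕ∞))

/-- The burning number of a graph: the least length of a burning sequence. -/
noncomputable def burningNumber {V : Type*} (G : SimpleGraph V) : ℕ :=
  sInf {k | ∃ x : ℕ → V, IsBurnSeq G k x}

/-- `G` is the unicyclic graph `U_g^{a₁,a₂}`: a cycle of length `g` with two pendant
paths of orders `a₁` and `a₂` attached at the vertex `x` (which has degree 4); all
other vertices have degree at most 2, the unique cycle has length `g`, `G` has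
`g + a₁ + a₂` vertices and edges, and deleting `x` leaves three components of
orders `g - 1`, `a₁` and `a₂`. -/
def IsUTwoArm {V : Type*} (G : SimpleGraph V) (x : V) (g a₁ a₂ : ℕ) : Prop :=
  G.Connected ∧ Nat.card V = g + a₁ + a₂ ∧ Nat.card G.edgeSet = g + a₁ + a₂ ∧
  G.girth = (g : ℕ∞) ∧
  (G.neighborSet x).ncard = 4 ∧
  (∀ v : V, v ≠ x → (G.neighborSet v).ncard ≤ 2) ∧
  ∃ c₁ c₂ c₃ : (G.induce ({x}ᶜ : Set V)).ConnectedComponent,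
    c₁ ≠ c₂ ∧ c₁ ≠ c₃ ∧ c₂ ≠ c₃ ∧
    (∀ c : (G.induce ({x}ᶜ : Set V)).ConnectedComponent, c = c₁ ∨ c = c₂ ∨ c = c₃) ∧
    Nat.card c₁.supp = g - 1 ∧ Nat.card c₂.supp = a₁ ∧ Nat.card c₃.supp = a₂

namespace BurnAux

variable {V : Type*}

/-- Split a walk at index `m`. -/
lemma walk_split (G : SimpleGraph V) {u v : V} (p : G.Walk u v) (m : ℕ) (hm : m ≤ p.length) :
    ∃ (w : V) (q : G.Walk u w) (q' : G.Walk w v),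
      q.length = m ∧ q'.length = p.length - m := by
  induction p generalizing m with
  | nil =>
    simp only [SimpleGraph.Walk.length_nil, Nat.le_zero] at hm
    exact ⟨_, .nil, .nil, by simp [hm], by simp⟩
  | @cons a b c h q ih =>
    rcases m with _ | m
    · exact ⟨a, .nil, .cons h q, by simp, by simp⟩
    · obtain ⟨w, q1, q2, h1, h2⟩ := ih m (by simpa [Nat.succ_le_succ_iff] using hm)
      exact ⟨w, .cons h q1, q2, by simp [h1], by simpa using h2⟩

lemma exists_dist_eq' (G : SimpleGraph V) (hconn : G.Connected) {u v : V} {m : ℕ}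
    (hm : m ≤ G.dist u v) : ∃ w : V, G.dist u w = m := by
  obtain ⟨p, hp⟩ := hconn.exists_walk_length_eq_dist u v
  obtain ⟨w, q, q', h1, h2⟩ := walk_split G p m (by omega)
  refine ⟨w, le_antisymm (h1 ▸ G.dist_le q) ?_⟩
  have h3 : G.dist w v ≤ p.length - m := h2 ▸ G.dist_le q'
  have h4 := hconn.dist_triangle (u := u) (v := w) (w := v)
  omega

lemma exists_pred (G : SimpleGraph V) (hconn : G.Connected) {u v : V} {d : ℕ}
    (h : G.dist u v = d + 1) : ∃ w : V, G.Adj w v ∧ G.dist u w = d := by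
  have hne : G.dist u v ≠ 0 := by omega
  obtain ⟨p, hp⟩ := SimpleGraph.exists_walk_of_dist_ne_zero hne
  obtain ⟨w, q, q', h1, h2⟩ := walk_split G p d (by omega)
  have hq' : q'.length = 1 := by omega
  have hadj : G.Adj w v := by
    cases q' with
    | nil => simp at hq'
    | cons hadj2 q'' =>
      have : q''.length = 0 := by simpa using hq'
      have := SimpleGraph.Walk.eq_of_length_eq_zero this
      subst this; exact hadj2
  have h3 : G.dist u w ≤ d := h1 ▸ G.dist_le q
  have h4 := hconn.dist_triangle (u := u) (v := w) (w := v)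
  have h5 : G.dist w v ≤ 1 := by
    rw [← SimpleGraph.dist_eq_one_iff_adj.mpr hadj]
  exact ⟨w, hadj, by omega⟩

lemma coe_dist_le_edist (G : SimpleGraph V) (u v : V) : (↑(G.dist u v) : ℕ∞) ≤ G.edist u v :=
  ENat.coe_toNat_le_self _

lemma sum_odd (k : ℕ) : ∑ i ∈ Finset.range k, (2 * i + 1) = k ^ 2 := by
  induction k with
  | zero => simp
  | succ k ih => rw [Finset.sum_range_succ, ih]; ring

lemma sum_radii (k : ℕ) : ∑ i ∈ Finset.range k, (2 * (k - 1 - i) + 1) = k ^ 2 := by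
  rw [← sum_odd k, ← Finset.sum_range_reflect]
  apply Finset.sum_congr rfl
  intro i hi
  simp only [Finset.mem_range] at hi
  congr 2
  omega

/-- There is some burning sequence. -/
lemma burn_exists (G : SimpleGraph V) [Fintype V] [Nonempty V] (hconn : G.Connected) :
    ∃ k xs, IsBurnSeq G k xs := by
  classical
  inhabit V
  set u : V := default with hu
  set E : ℕ := Finset.univ.sup (fun z => G.dist u z) with hE
  have hle : ∀ z : V, G.dist u z ≤ E := fun z => Finset.le_sup (Finset.mem_univ z)
  have hpick : ∀ i ≤ E, ∃ w, G.dist u w = i := fun i hi => by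
    obtain ⟨z, _, hz⟩ := Finset.exists_mem_eq_sup Finset.univ Finset.univ_nonempty
      (fun z => G.dist u z)
    exact exists_dist_eq' G hconn (le_trans hi (le_of_eq hz))
  choose pick hpickspec using hpick
  refine ⟨E + 1, fun i => if h : i ≤ E then pick i h else u, ?_, ?_⟩
  · intro i j hij hj
    have hj' : j ≤ E := by omega
    have hi' : i ≤ E := by omega
    simp only [dif_pos hi', dif_pos hj']
    have h1 : G.dist u (pick j hj') = j := hpickspec j hj'
    have h2 : G.dist u (pick i hi') = i := hpickspec i hi'
    have h3 := hconn.dist_triangle (u := u) (v := pick i hi') (w := pick j hj')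
    have h4 : (j - i : ℕ) ≤ G.dist (pick i hi') (pick j hj') := by omega
    calc ((j - i : ℕ) : ℕ∞) ≤ (G.dist (pick i hi') (pick j hj') : ℕ∞) := by
          exact_mod_cast h4
    _ ≤ _ := coe_dist_le_edist G _ _
  · intro v
    refine ⟨0, by omega, ?_⟩
    have h0 : (0 : ℕ) ≤ E := Nat.zero_le _
    simp only [dif_pos h0]
    have hx0 : pick 0 h0 = u := by
      have := hpickspec 0 h0
      have := (hconn.dist_eq_zero_iff (u := u) (v := pick 0 h0)).mp this
      exact this.symm
    rw [hx0]
    obtain ⟨p, hp⟩ := (hconn u v).exists_walk_length_eq_dist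
    calc G.edist u v ≤ (p.length : ℕ∞) := SimpleGraph.edist_le p
    _ = (G.dist u v : ℕ∞) := by rw [hp]
    _ ≤ ((E + 1 - 1 - 0 : ℕ) : ℕ∞) := by
        simp only [Nat.add_sub_cancel, Nat.sub_zero]
        exact_mod_cast hle v

/-- Counting lemma: a far pair forces long burning sequences. -/
lemma burn_count (G : SimpleGraph V) (hconn : G.Connected) {u v : V} {k : ℕ} {xs : ℕ → V}
    (hbs : IsBurnSeq G k xs) : G.dist u v + 1 ≤ k ^ 2 := by
  classical
  set M := G.dist u v with hM
  have hreal : ∀ m ≤ M, ∃ w, G.dist u w = m := fun m hm => exists_dist_eq' G hconn hm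
  choose w hw using hreal
  have hcov : ∀ m (hm : m ≤ M), ∃ i < k,
      G.dist (xs i) (w m hm) ≤ k - 1 - i := by
    intro m hm
    obtain ⟨i, hik, hle⟩ := hbs.2 (w m hm)
    refine ⟨i, hik, ?_⟩
    have h2 : (↑(G.dist (xs i) (w m hm)) : ℕ∞) ≤ ((k - 1 - i : ℕ) : ℕ∞) :=
      le_trans (coe_dist_le_edist G _ _) hle
    exact_mod_cast h2
  have hsub : Finset.Icc 0 M ⊆ (Finset.range k).biUnion
      (fun i => Finset.Icc (G.dist u (xs i) - (k - 1 - i)) (G.dist u (xs i) + (k - 1 - i))) := by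
    intro m hmem
    simp only [Finset.mem_Icc] at hmem
    obtain ⟨i, hik, hdist⟩ := hcov m hmem.2
    simp only [Finset.mem_biUnion, Finset.mem_range, Finset.mem_Icc]
    refine ⟨i, hik, ?_, ?_⟩
    · have h1 := hconn.dist_triangle (u := u) (v := w m hmem.2) (w := xs i)
      rw [hw m hmem.2] at h1
      rw [SimpleGraph.dist_comm (u := w m hmem.2)] at h1
      omega
    · have h2 := hconn.dist_triangle (u := u) (v := xs i) (w := w m hmem.2)
      rw [hw m hmem.2] at *
      omega
  have hcard := Finset.card_le_card hsub
  have h3 : ((Finset.range k).biUnion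
      (fun i => Finset.Icc (G.dist u (xs i) - (k - 1 - i)) (G.dist u (xs i) + (k - 1 - i)))).card
      ≤ ∑ i ∈ Finset.range k, (2 * (k - 1 - i) + 1) := by
    refine le_trans (Finset.card_biUnion_le) (Finset.sum_le_sum ?_)
    intro i _
    rw [Nat.card_Icc]
    omega
  rw [Nat.card_Icc] at hcard
  have := sum_radii k
  omega

/-- Sphere-counting. -/
lemma sphere_count (G : SimpleGraph V) [Fintype V] (hconn : G.Connected) (x : V) (C : Set V)
    (b : ℕ) (hxC : x ∉ C)
    (hclosed : ∀ v ∈ C, ∀ w, G.Adj v w → w ≠ x → w ∈ C)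
    (hdeg : ∀ v ∈ C, (G.neighborSet v).ncard ≤ 2)
    (hnb : ((G.neighborSet x) ∩ C).ncard ≤ b)
    (D : ℕ) (hD : ∀ v ∈ C, G.dist x v ≤ D) :
    C.ncard ≤ b * D := by
  classical
  set S : ℕ → Finset V := fun d => Finset.univ.filter (fun v => v ∈ C ∧ G.dist x v = d) with hS
  have hpos : ∀ v ∈ C, 1 ≤ G.dist x v := by
    intro v hv
    have hne : v ≠ x := fun h => hxC (h ▸ hv)
    have := SimpleGraph.Connected.pos_dist_of_ne hconn (Ne.symm hne)
    omega
  have hS1 : (S 1).card ≤ b := by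
    have hsub : ↑(S 1) ⊆ (G.neighborSet x) ∩ C := by
      intro v hv
      simp only [hS, Finset.coe_filter, Set.mem_setOf_eq, Finset.mem_univ, true_and] at hv
      exact ⟨SimpleGraph.dist_eq_one_iff_adj.mp hv.2, hv.1⟩
    calc (S 1).card = (↑(S 1) : Set V).ncard := by rw [Set.ncard_coe_finset]
    _ ≤ ((G.neighborSet x) ∩ C).ncard := Set.ncard_le_ncard hsub (Set.toFinite _)
    _ ≤ b := hnb
  have hstep : ∀ d : ℕ, 1 ≤ d → (S (d + 1)).card ≤ (S d).card := by
    intro d hd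
    have hex : ∀ v, v ∈ C ∧ G.dist x v = d + 1 → ∃ w, G.Adj w v ∧ G.dist x w = d :=
      fun v hv => exists_pred G hconn hv.2
    choose! f hf using hex
    apply Finset.card_le_card_of_injOn f
    · intro v hv
      simp only [hS, Finset.mem_coe, Finset.mem_filter, Finset.mem_univ, true_and] at hv ⊢
      obtain ⟨hadj, hdist⟩ := hf v hv
      have hfne : f v ≠ x := by
        intro h
        rw [h] at hdist
        simp [SimpleGraph.dist_self] at hdist
        omega
      exact ⟨hclosed v hv.1 (f v) hadj.symm hfne, hdist⟩
    · intro v1 hv1 v2 hv2 heq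
      by_contra hne
      simp only [hS, Finset.coe_filter, Set.mem_setOf_eq, Finset.mem_univ, true_and] at hv1 hv2
      obtain ⟨hadj1, hdist1⟩ := hf v1 hv1
      obtain ⟨hadj2, hdist2⟩ := hf v2 hv2
      set w := f v1 with hw
      have hwC : w ∈ C := hclosed v1 hv1.1 w hadj1.symm
        (fun h => by rw [h] at hdist1; simp [SimpleGraph.dist_self] at hdist1; omega)
      obtain ⟨d', hd'⟩ : ∃ d', d = d' + 1 := ⟨d - 1, by omega⟩
      obtain ⟨p, hpadj, hpdist⟩ := exists_pred G hconn (hd' ▸ hdist1)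
      have hp1 : p ≠ v1 := fun h => by rw [h] at hpdist; omega
      have hp2 : p ≠ v2 := fun h => by rw [h] at hpdist; rw [hv2.2] at hpdist; omega
      have hsub : ({p, v1, v2} : Set V) ⊆ G.neighborSet w := by
        intro z hz
        rcases hz with h | h | h
        · subst h; exact hpadj.symm
        · subst h; exact hadj1
        · subst h; rw [← heq] at hadj2; exact hadj2
      have h3 : ({p, v1, v2} : Set V).ncard = 3 := by
        rw [Set.ncard_eq_three]
        exact ⟨p, v1, v2, hp1, hp2, hne, rfl⟩
      have := Set.ncard_le_ncard hsub (Set.toFinite _)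
      have := hdeg w hwC
      omega
  have hSle : ∀ d : ℕ, 1 ≤ d → (S d).card ≤ b := by
    intro d hd
    induction d with
    | zero => omega
    | succ d ih =>
      rcases Nat.eq_or_lt_of_le hd with h | h
      · rw [← h]; exact hS1
      · exact le_trans (hstep d (by omega)) (ih (by omega))
  have hcov : C.toFinset ⊆ (Finset.Icc 1 D).biUnion S := by
    intro v hv
    rw [Set.mem_toFinset] at hv
    simp only [Finset.mem_biUnion, Finset.mem_Icc, hS, Finset.mem_filter, Finset.mem_univ,
      true_and]
    exact ⟨G.dist x v, ⟨hpos v hv, hD v hv⟩, hv, rfl⟩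
  calc C.ncard = C.toFinset.card := Set.ncard_eq_toFinset_card' C
  _ ≤ ((Finset.Icc 1 D).biUnion S).card := Finset.card_le_card hcov
  _ ≤ ∑ d ∈ Finset.Icc 1 D, (S d).card := Finset.card_biUnion_le
  _ ≤ ∑ d ∈ Finset.Icc 1 D, b := Finset.sum_le_sum (fun d hd => hSle d (Finset.mem_Icc.mp hd).1)
  _ ≤ b * D := by rw [Finset.sum_const, Nat.card_Icc, smul_eq_mul]
                  have : D + 1 - 1 = D := by omega
                  rw [this, Nat.mul_comm]

lemma three_nbrs (G : SimpleGraph V) [Fintype V] {w u₁ u₂ z : V} (h1 : G.Adj w u₁) (h2 : G.Adj w u₂)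
    (h3 : G.Adj w z) (h12 : u₁ ≠ u₂) (h1z : u₁ ≠ z) (h2z : u₂ ≠ z) :
    3 ≤ (G.neighborSet w).ncard := by
  have hsub : ({u₁, u₂, z} : Set V) ⊆ G.neighborSet w := by
    intro y hy
    rcases hy with h | h | h
    · subst h; exact h1
    · subst h; exact h2
    · subst h; exact h3
  have h3' : ({u₁, u₂, z} : Set V).ncard = 3 :=
    Set.ncard_eq_three.mpr ⟨u₁, u₂, z, h12, h1z, h2z, rfl⟩
  have := Set.ncard_le_ncard hsub (Set.toFinite _)
  omega

/-- A walk avoiding `x` stays within one component of `G - x`. -/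
lemma comp_of_walk (G : SimpleGraph V) (x : V) : ∀ {a b : V} (p : G.Walk a b)
    (_ : ∀ y ∈ p.support, y ≠ x)
    (ha : a ∈ ({x}ᶜ : Set V)) (hb : b ∈ ({x}ᶜ : Set V)),
    (G.induce ({x}ᶜ : Set V)).connectedComponentMk ⟨a, ha⟩ =
    (G.induce ({x}ᶜ : Set V)).connectedComponentMk ⟨b, hb⟩ := by
  intro a b p
  induction p with
  | nil => intro _ _ _; rfl
  | @cons a c b h q ih =>
    intro hsup ha hb
    have hc : c ∈ ({x}ᶜ : Set V) :=
      Set.mem_compl_singleton_iff.mpr (hsup c (by simp [SimpleGraph.Walk.support_cons]))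
    have hadj : (G.induce ({x}ᶜ : Set V)).Adj ⟨a, ha⟩ ⟨c, hc⟩ := by
      simp only [comap_adj, Function.Embedding.coe_subtype]
      exact h
    refine (ConnectedComponent.sound hadj.reachable).trans (ih ?_ hc hb)
    intro y hy
    exact hsup y (by simp [SimpleGraph.Walk.support_cons, hy])

/-- Same component of `G - x` gives a walk in `G` avoiding `x`. -/
lemma walk_of_comp (G : SimpleGraph V) (x : V) {a b : V}
    (ha : a ∈ ({x}ᶜ : Set V)) (hb : b ∈ ({x}ᶜ : Set V))
    (h : (G.induce ({x}ᶜ : Set V)).connectedComponentMk ⟨a, ha⟩ =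
      (G.induce ({x}ᶜ : Set V)).connectedComponentMk ⟨b, hb⟩) :
    ∃ p : G.Walk a b, ∀ y ∈ p.support, y ≠ x := by
  have hr : (G.induce ({x}ᶜ : Set V)).Reachable ⟨a, ha⟩ ⟨b, hb⟩ :=
    (ConnectedComponent.eq).mp h
  obtain ⟨p⟩ := hr
  let φ : G.induce ({x}ᶜ : Set V) →g G :=
    ⟨Subtype.val, fun {u v} h => h⟩
  refine ⟨p.map φ, ?_⟩
  intro y hy
  rw [SimpleGraph.Walk.support_map] at hy
  obtain ⟨z, hz, rfl⟩ := List.mem_map.mp hy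
  exact Set.mem_compl_singleton_iff.mp z.2

/-- Decomposition of a cycle based at `w`. -/
lemma cycle_decomp (G : SimpleGraph V) {w : V} (c : G.Walk w w) (hc : c.IsCycle) :
    ∃ (u₁ u₂ : V) (r' : G.Walk u₂ u₁), u₁ ≠ u₂ ∧ G.Adj w u₁ ∧ G.Adj w u₂ ∧
      w ∉ r'.support ∧ r'.support.Nodup ∧ r'.length + 2 = c.length ∧
      (∀ y, y ∈ c.support ↔ (y = w ∨ y ∈ r'.support)) := by
  have hnil : ¬ c.Nil := hc.not_nil
  set b := c.getVert 1 with hb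
  have h : G.Adj w b := c.adj_snd hnil
  set q := c.tail with hq0
  have hcons0 : SimpleGraph.Walk.cons h q = c := SimpleGraph.Walk.cons_tail_eq c hnil
  have hc' : (SimpleGraph.Walk.cons h q).IsCycle := by rw [hcons0]; exact hc
  have hclen : q.length + 1 = c.length := by
    have := congrArg SimpleGraph.Walk.length hcons0
    rwa [SimpleGraph.Walk.length_cons] at this
  have hcsup : c.support = w :: q.support := by
    have := congrArg SimpleGraph.Walk.support hcons0
    rw [SimpleGraph.Walk.support_cons] at this
    exact this.symm
  have hlen : 2 ≤ q.length := by
    have := hc.three_le_length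
    omega
  rw [SimpleGraph.Walk.cons_isCycle_iff] at hc'
  obtain ⟨hq, hs⟩ := hc'
  set r := q.reverse with hrdef
  have hrpath : r.IsPath := hq.reverse
  have hrlen : r.length = q.length := SimpleGraph.Walk.length_reverse q
  have hrnil : ¬ r.Nil := by
    rw [SimpleGraph.Walk.nil_iff_length_eq, hrlen]
    omega
  set u₂ := r.getVert 1 with hu₂
  have h₂ : G.Adj w u₂ := r.adj_snd hrnil
  set r'' := r.tail with hr''def
  have hcons : SimpleGraph.Walk.cons h₂ r'' = r := SimpleGraph.Walk.cons_tail_eq r hrnil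
  have hrsup : r.support = w :: r''.support := by
    have := congrArg SimpleGraph.Walk.support hcons
    rw [SimpleGraph.Walk.support_cons] at this
    exact this.symm
  have hnodup : (w :: r''.support).Nodup := by
    rw [← hrsup]
    exact hrpath.support_nodup
  have hwns : w ∉ r''.support := (List.nodup_cons.mp hnodup).1
  have hr''nodup : r''.support.Nodup := (List.nodup_cons.mp hnodup).2
  have hedge : s(w, u₂) ∈ q.edges := by
    have h1 : s(w, u₂) ∈ r.edges := by
      have := congrArg SimpleGraph.Walk.edges hcons
      rw [SimpleGraph.Walk.edges_cons] at this
      rw [← this]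
      exact List.mem_cons_self
    rwa [hrdef, SimpleGraph.Walk.edges_reverse, List.mem_reverse] at h1
  have hne : b ≠ u₂ := by
    intro hbu
    rw [← hbu] at hedge
    exact hs hedge
  have hlenr : r''.length + 2 = c.length := by
    have h1 : r''.length + 1 = r.length := SimpleGraph.Walk.length_tail_add_one hrnil
    omega
  refine ⟨b, u₂, r'', hne, h, h₂, hwns, hr''nodup, hlenr, ?_⟩
  intro y
  rw [hcsup]
  have hqsup : ∀ z, z ∈ q.support ↔ z = w ∨ z ∈ r''.support := by
    intro z
    have h1 : z ∈ q.support ↔ z ∈ r.support := by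
      rw [hrdef, SimpleGraph.Walk.support_reverse, List.mem_reverse]
    rw [h1, hrsup]
    simp
  constructor
  · intro hy
    rcases List.mem_cons.mp hy with h' | h'
    · exact Or.inl h'
    · exact (hqsup y).mp h'
  · intro hy
    rcases hy with h' | h'
    · rw [h']
      exact List.mem_cons_self
    · exact List.mem_cons.mpr (Or.inr ((hqsup y).mpr (Or.inr h')))

/-- Every vertex of a cycle has two distinct neighbors on the cycle. -/
lemma cycle_two_nbrs (G : SimpleGraph V) {a : V} (c : G.Walk a a) (hc : c.IsCycle) {w : V}
    (hw : w ∈ c.support) :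
    ∃ u₁ u₂, u₁ ≠ u₂ ∧ G.Adj w u₁ ∧ G.Adj w u₂ ∧ u₁ ∈ c.support ∧ u₂ ∈ c.support := by
  classical
  have hrot : (c.rotate _ hw).IsCycle := hc.rotate hw
  obtain ⟨u₁, u₂, r', hne, h1, h2, _, _, _, hchar⟩ := cycle_decomp G _ hrot
  have hsub : ∀ z, z ∈ (c.rotate _ hw).support → z ∈ c.support := by
    intro z hz
    rw [SimpleGraph.Walk.rotate, SimpleGraph.Walk.mem_support_append_iff] at hz
    rcases hz with h | h
    · exact SimpleGraph.Walk.support_dropUntil_subset c hw h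
    · exact SimpleGraph.Walk.support_takeUntil_subset c hw h
  refine ⟨u₁, u₂, hne, h1, h2, ?_, ?_⟩
  · exact hsub u₁ ((hchar u₁).mpr (Or.inr (SimpleGraph.Walk.end_mem_support r')))
  · exact hsub u₂ ((hchar u₂).mpr (Or.inr (SimpleGraph.Walk.start_mem_support r')))

/-- With the degree constraints, every cycle passes through `x`. -/
lemma cycle_through_x (G : SimpleGraph V) [Fintype V] (x : V) (hconn : G.Connected)
    (hdeg : ∀ v : V, v ≠ x → (G.neighborSet v).ncard ≤ 2) {a : V} (c : G.Walk a a)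
    (hc : c.IsCycle) : x ∈ c.support := by
  by_contra hx
  obtain ⟨p⟩ := hconn a x
  obtain ⟨d, _, hfst, hsnd⟩ := p.exists_boundary_dart {y | y ∈ c.support}
    (SimpleGraph.Walk.start_mem_support c) hx
  have hwx : d.fst ≠ x := fun h => hx (h ▸ hfst)
  obtain ⟨u₁, u₂, hne, h1, h2, hm1, hm2⟩ := cycle_two_nbrs G c hc hfst
  have h3 := three_nbrs G h1 h2 d.adj hne
    (fun h => hsnd (h ▸ hm1)) (fun h => hsnd (h ▸ hm2))
  have := hdeg d.fst hwx
  omega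

/-- Distance through the cut vertex `x` for vertices in different components. -/
lemma dist_through_x (G : SimpleGraph V) (x : V) (hconn : G.Connected) {u v : V}
    (ha : u ∈ ({x}ᶜ : Set V)) (hb : v ∈ ({x}ᶜ : Set V))
    (hne : (G.induce ({x}ᶜ : Set V)).connectedComponentMk ⟨u, ha⟩ ≠
      (G.induce ({x}ᶜ : Set V)).connectedComponentMk ⟨v, hb⟩) :
    G.dist u x + G.dist x v ≤ G.dist u v := by
  classical
  obtain ⟨p, hp⟩ := hconn.exists_walk_length_eq_dist u v
  by_cases hx : x ∈ p.support
  · have hspec := p.take_spec hx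
    have hlen : (p.takeUntil x hx).length + (p.dropUntil x hx).length = p.length := by
      have := congrArg SimpleGraph.Walk.length hspec
      rwa [SimpleGraph.Walk.length_append] at this
    have h1 : G.dist u x ≤ (p.takeUntil x hx).length := G.dist_le _
    have h2 : G.dist x v ≤ (p.dropUntil x hx).length := G.dist_le _
    omega
  · exact absurd (comp_of_walk G x p (fun y hy h => hx (h ▸ hy)) ha hb) hne

end BurnAux
open SimpleGraph
section
open BurnAux
/-- For `U_g^{a₁,a₂}` (`a₁ ≥ a₂ ≥ 1`) of order `n = q² + r` with `1 ≤ r ≤ 2q + 1`: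
if `3 ≤ g ≤ r` or `a₁ ≥ q² - ⌊g/2⌋`, then `b(U_g^{a₁,a₂}) ≥ q + 1`. -/
theorem stmt_16 {V : Type*} [Fintype V] (G : SimpleGraph V) (x : V) (g a₁ a₂ n q r : ℕ)
    (ha : a₂ ≤ a₁) (ha2 : 1 ≤ a₂)
    (hn : n = g + a₁ + a₂) (hnqr : n = q ^ 2 + r) (hr1 : 1 ≤ r) (hr2 : r ≤ 2 * q + 1)
    (hG : IsUTwoArm G x g a₁ a₂)
    (hcond : (3 ≤ g ∧ g ≤ r) ∨ q ^ 2 - g / 2 ≤ a₁) :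
    q + 1 ≤ burningNumber G := by
  classical
  set G' := G.induce ({x}ᶜ : Set V) with hG'def
  obtain ⟨hconn, hcardV, hedges, hgirth, hdegx, hdeg, c₁, c₂, c₃, h12, h13, h23, hall,
    k1, k2, k3⟩ := hG
  -- vertex sets of the components, inside V
  set Cs : G'.ConnectedComponent → Set V := fun c => Subtype.val '' c.supp with hCsdef
  have hmem : ∀ (c : G'.ConnectedComponent) (v : V), v ∈ Cs c ↔
      ∃ h : v ∈ ({x}ᶜ : Set V), G'.connectedComponentMk ⟨v, h⟩ = c := by
    intro c v
    constructor
    · rintro ⟨z, hz, rfl⟩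
      exact ⟨z.2, (ConnectedComponent.mem_supp_iff c z).mp hz⟩
    · rintro ⟨h, hk⟩
      exact ⟨⟨v, h⟩, (ConnectedComponent.mem_supp_iff c _).mpr hk, rfl⟩
  have hxnot : ∀ c : G'.ConnectedComponent, x ∉ Cs c := by
    intro c hx
    obtain ⟨h, _⟩ := (hmem c x).mp hx
    exact (Set.mem_compl_singleton_iff.mp h) rfl
  have hCs_card : ∀ c : G'.ConnectedComponent, (Cs c).ncard = Nat.card c.supp := by
    intro c
    rw [hCsdef]
    rw [Set.ncard_image_of_injective _ Subtype.val_injective]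
    exact (Nat.card_coe_set_eq _).symm
  have hclosed : ∀ c : G'.ConnectedComponent, ∀ v ∈ Cs c, ∀ w, G.Adj v w → w ≠ x → w ∈ Cs c := by
    intro c v hv w hadj hwx
    obtain ⟨hvm, hk⟩ := (hmem c v).mp hv
    have hwm : w ∈ ({x}ᶜ : Set V) := Set.mem_compl_singleton_iff.mpr hwx
    have hadj' : G'.Adj ⟨v, hvm⟩ ⟨w, hwm⟩ := by
      rw [hG'def]
      simp only [comap_adj, Function.Embedding.coe_subtype]
      exact hadj
    exact (hmem c w).mpr ⟨hwm, ((ConnectedComponent.sound hadj'.symm.reachable).trans hk)⟩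
  have hdisj : ∀ c c' : G'.ConnectedComponent, c ≠ c' → ∀ v, v ∈ Cs c → v ∈ Cs c' → False := by
    intro c c' hne v hv hv'
    obtain ⟨h1, hk1⟩ := (hmem c v).mp hv
    obtain ⟨h2, hk2⟩ := (hmem c' v).mp hv'
    exact hne (hk1.symm.trans hk2 : c = c')
  have hnonempty : ∀ c : G'.ConnectedComponent, (Cs c).Nonempty := by
    intro c
    obtain ⟨z, hz⟩ := c.exists_rep
    exact ⟨z.1, (hmem c z.1).mpr ⟨z.2, hz⟩⟩
  -- neighbor counts
  have hEpos : ∀ c : G'.ConnectedComponent, 1 ≤ (G.neighborSet x ∩ Cs c).ncard := by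
    intro c
    obtain ⟨v, hv⟩ := hnonempty c
    obtain ⟨p⟩ := hconn v x
    obtain ⟨d, _, hfst, hsnd⟩ := p.exists_boundary_dart (Cs c) hv (hxnot c)
    have hsx : d.snd = x := by
      by_contra hne
      exact hsnd (hclosed c d.fst hfst d.snd d.adj hne)
    have hfx : d.fst ∈ G.neighborSet x ∩ Cs c := by
      refine ⟨?_, hfst⟩
      have := d.adj
      rw [hsx] at this
      exact this.symm
    have := Set.ncard_pos (Set.toFinite _) |>.mpr ⟨d.fst, hfx⟩
    omega
  have hEsum : (G.neighborSet x ∩ Cs c₁).ncard + (G.neighborSet x ∩ Cs c₂).ncard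
      + (G.neighborSet x ∩ Cs c₃).ncard = 4 := by
    have hU : G.neighborSet x =
        (G.neighborSet x ∩ Cs c₁) ∪ (G.neighborSet x ∩ Cs c₂) ∪ (G.neighborSet x ∩ Cs c₃) := by
      ext w
      constructor
      · intro hw
        have hwx : w ≠ x := (G.ne_of_adj hw).symm
        have hwm : w ∈ ({x}ᶜ : Set V) := Set.mem_compl_singleton_iff.mpr hwx
        rcases hall (G'.connectedComponentMk ⟨w, hwm⟩) with h | h | h
        · exact Or.inl (Or.inl ⟨hw, (hmem c₁ w).mpr ⟨hwm, h⟩⟩)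
        · exact Or.inl (Or.inr ⟨hw, (hmem c₂ w).mpr ⟨hwm, h⟩⟩)
        · exact Or.inr ⟨hw, (hmem c₃ w).mpr ⟨hwm, h⟩⟩
      · rintro ((h | h) | h) <;> exact h.1
    have hd12 : Disjoint (G.neighborSet x ∩ Cs c₁) (G.neighborSet x ∩ Cs c₂) :=
      Set.disjoint_left.mpr (fun a h1 h2 => hdisj c₁ c₂ h12 a h1.2 h2.2)
    have hd3 : Disjoint ((G.neighborSet x ∩ Cs c₁) ∪ (G.neighborSet x ∩ Cs c₂))
        (G.neighborSet x ∩ Cs c₃) := by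
      rw [Set.disjoint_union_left]
      exact ⟨Set.disjoint_left.mpr (fun a h1 h2 => hdisj c₁ c₃ h13 a h1.2 h2.2),
        Set.disjoint_left.mpr (fun a h1 h2 => hdisj c₂ c₃ h23 a h1.2 h2.2)⟩
    calc _ = ((G.neighborSet x ∩ Cs c₁) ∪ (G.neighborSet x ∩ Cs c₂)).ncard
        + (G.neighborSet x ∩ Cs c₃).ncard := by
          rw [Set.ncard_union_eq hd12 (Set.toFinite _) (Set.toFinite _)]
    _ = (G.neighborSet x).ncard := by
          rw [← Set.ncard_union_eq hd3 (Set.toFinite _) (Set.toFinite _), ← hU]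
    _ = 4 := hdegx
  -- girth facts
  have hgirthN : G.girth = g := by exact_mod_cast hgirth
  have hacyc : ¬ G.IsAcyclic := by
    intro hA
    have h0 : G.girth = 0 := hA.girth_eq_zero
    obtain ⟨v, hv⟩ := hnonempty c₁
    have hpos : 0 < (Cs c₁).ncard := Set.ncard_pos (Set.toFinite _) |>.mpr ⟨v, hv⟩
    rw [hCs_card c₁, k1] at hpos
    omega
  have hg3 : 3 ≤ g := by
    have := SimpleGraph.three_le_girth hacyc
    omega
  obtain ⟨a0, c0, hc0, hlen0⟩ := SimpleGraph.exists_girth_eq_length.mpr hacyc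
  have hc0len : c0.length = g := by omega
  have hxc : x ∈ c0.support := cycle_through_x G x hconn hdeg c0 hc0
  set cyc := c0.rotate _ hxc with hcycdef
  have hcycIsC : cyc.IsCycle := hc0.rotate hxc
  have hcyclen : cyc.length = g := by
    have h1 : (c0.takeUntil x hxc).length + (c0.dropUntil x hxc).length = c0.length := by
      have := congrArg SimpleGraph.Walk.length (c0.take_spec hxc)
      rwa [SimpleGraph.Walk.length_append] at this
    have h2 : cyc.length
        = (c0.dropUntil x hxc).length + (c0.takeUntil x hxc).length := by
      rw [hcycdef, SimpleGraph.Walk.rotate, SimpleGraph.Walk.length_append]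
    omega
  obtain ⟨u₁, u₂, r', hneu, hadj1, hadj2, hxr, hnodup, hlenr, hchar⟩ :=
    cycle_decomp G cyc hcycIsC
  have hu2m : u₂ ∈ ({x}ᶜ : Set V) := Set.mem_compl_singleton_iff.mpr hadj2.ne'
  set cstar := G'.connectedComponentMk ⟨u₂, hu2m⟩ with hcstardef
  have hrsub : ∀ y ∈ r'.support, y ∈ Cs cstar := by
    intro y hy
    have hsup : ∀ z ∈ (r'.takeUntil y hy).support, z ≠ x := fun z hz h =>
      hxr (h ▸ (SimpleGraph.Walk.support_takeUntil_subset r' hy hz))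
    have hym : y ∈ ({x}ᶜ : Set V) :=
      Set.mem_compl_singleton_iff.mpr (fun h => hxr (h ▸ hy))
    have hcw := comp_of_walk G x (r'.takeUntil y hy) hsup hu2m hym
    exact (hmem cstar y).mpr ⟨hym, hcw.symm⟩
  have hu1mem : u₁ ∈ Cs cstar := hrsub u₁ r'.end_mem_support
  have hu2mem : u₂ ∈ Cs cstar := hrsub u₂ r'.start_mem_support
  have hstar2 : 2 ≤ (G.neighborSet x ∩ Cs cstar).ncard := by
    have hsub : ({u₁, u₂} : Set V) ⊆ G.neighborSet x ∩ Cs cstar := by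
      intro z hz
      rcases hz with h | h
      · subst h; exact ⟨hadj1, hu1mem⟩
      · subst h; exact ⟨hadj2, hu2mem⟩
    have := Set.ncard_le_ncard hsub (Set.toFinite _)
    rwa [Set.ncard_pair hneu] at this
  have hlensup : r'.support.length = g - 1 := by
    rw [SimpleGraph.Walk.length_support]
    omega
  have hstar_lb : g - 1 ≤ (Cs cstar).ncard := by
    have hsub : ↑r'.support.toFinset ⊆ Cs cstar := by
      intro z hz
      rw [Finset.mem_coe, List.mem_toFinset] at hz
      exact hrsub z hz
    have := Set.ncard_le_ncard hsub (Set.toFinite _)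
    rwa [Set.ncard_coe_finset, List.toFinset_card_of_nodup hnodup, hlensup] at this
  have hcycsub : Cs cstar ⊆ {y | y ∈ r'.support} := by
    intro v hv
    by_contra hvr
    have hvnx : v ≠ x := fun h => hxnot cstar (h ▸ hv)
    have hvcyc : v ∉ cyc.support := by
      intro hvc
      rcases (hchar v).mp hvc with h | h
      · exact hvnx h
      · exact hvr h
    obtain ⟨hvm, hkv⟩ := (hmem cstar v).mp hv
    obtain ⟨p, hp⟩ := walk_of_comp G x hu2m hvm hkv.symm
    obtain ⟨d, hd, hfst, hsnd⟩ := p.exists_boundary_dart {y | y ∈ cyc.support}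
      ((hchar u₂).mpr (Or.inr r'.start_mem_support)) hvcyc
    have hfstx : d.fst ≠ x := hp d.fst (SimpleGraph.Walk.dart_fst_mem_support_of_mem_darts p hd)
    obtain ⟨w₁, w₂, hww, hw1, hw2, hm1, hm2⟩ := cycle_two_nbrs G cyc hcycIsC hfst
    have h3n := three_nbrs G hw1 hw2 d.adj hww (fun h => hsnd (h ▸ hm1)) (fun h => hsnd (h ▸ hm2))
    have := hdeg d.fst hfstx
    omega
  have hstar_ub : (Cs cstar).ncard ≤ g - 1 := by
    have h1 : Cs cstar ⊆ ↑r'.support.toFinset := by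
      intro z hz
      rw [Finset.mem_coe, List.mem_toFinset]
      exact hcycsub hz
    have := Set.ncard_le_ncard h1 (Set.toFinite _)
    rwa [Set.ncard_coe_finset, List.toFinset_card_of_nodup hnodup, hlensup] at this
  -- eccentricity extraction
  have hecc1 : ∀ c : G'.ConnectedComponent, (G.neighborSet x ∩ Cs c).ncard ≤ 1 →
      ∃ v ∈ Cs c, (Cs c).ncard ≤ G.dist x v := by
    intro c hc1
    by_contra hno
    push_neg at hno
    have hD : ∀ v ∈ Cs c, G.dist x v ≤ (Cs c).ncard - 1 := fun v hv => by
      have := hno v hv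
      omega
    have hsc := sphere_count G hconn x (Cs c) 1 (hxnot c) (hclosed c)
      (fun v hv => hdeg v (fun h => hxnot c (h ▸ hv))) hc1 ((Cs c).ncard - 1) hD
    have hpos := Set.ncard_pos (Set.toFinite _) |>.mpr (hnonempty c)
    omega
  have hecc2 : ∃ v ∈ Cs cstar, g / 2 ≤ G.dist x v := by
    by_contra hno
    push_neg at hno
    have hD : ∀ v ∈ Cs cstar, G.dist x v ≤ g / 2 - 1 := fun v hv => by
      have := hno v hv
      omega
    have hc2 : (G.neighborSet x ∩ Cs cstar).ncard ≤ 2 := by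
      have p1 := hEpos c₁
      have p2 := hEpos c₂
      have p3 := hEpos c₃
      rcases hall cstar with h | h | h <;> rw [h] <;> omega
    have hsc := sphere_count G hconn x (Cs cstar) 2 (hxnot cstar) (hclosed cstar)
      (fun v hv => hdeg v (fun h => hxnot cstar (h ▸ hv))) hc2 (g / 2 - 1) hD
    omega
  -- key: two far-from-x vertices in different components are far apart
  have key : ∀ (cA cB : G'.ConnectedComponent), cA ≠ cB → ∀ sA sB : ℕ,
      (∃ v ∈ Cs cA, sA ≤ G.dist x v) → (∃ v ∈ Cs cB, sB ≤ G.dist x v) →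
      q ^ 2 ≤ sA + sB → ∃ u v : V, q ^ 2 ≤ G.dist u v := by
    rintro cA cB hAB sA sB ⟨vA, hvA, hdA⟩ ⟨vB, hvB, hdB⟩ hsum
    obtain ⟨hmA, hkA⟩ := (hmem cA vA).mp hvA
    obtain ⟨hmB, hkB⟩ := (hmem cB vB).mp hvB
    have hne' : G'.connectedComponentMk ⟨vA, hmA⟩ ≠ G'.connectedComponentMk ⟨vB, hmB⟩ := by
      rw [hkA, hkB]; exact hAB
    have hd := dist_through_x G x hconn hmA hmB hne'
    have hcomm : G.dist vA x = G.dist x vA := SimpleGraph.dist_comm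
    exact ⟨vA, vB, by omega⟩
  -- produce a far pair
  have hfar : ∃ u v : V, q ^ 2 ≤ G.dist u v := by
    have hncc : (Cs cstar).ncard = g - 1 := le_antisymm hstar_ub hstar_lb
    have p1 := hEpos c₁
    have p2 := hEpos c₂
    have p3 := hEpos c₃
    rcases hall cstar with hcs | hcs | hcs
    · -- cstar = c₁
      have hstar2' : 2 ≤ (G.neighborSet x ∩ Cs c₁).ncard := by rw [← hcs]; exact hstar2
      have hE2 : (G.neighborSet x ∩ Cs c₂).ncard ≤ 1 := by omega
      have hE3 : (G.neighborSet x ∩ Cs c₃).ncard ≤ 1 := by omega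
      obtain ⟨vA, hvA, hdA⟩ := hecc1 c₂ hE2
      rw [hCs_card c₂, k2] at hdA
      rcases hcond with ⟨hg3', hgr⟩ | hq2
      · obtain ⟨vB, hvB, hdB⟩ := hecc1 c₃ hE3
        rw [hCs_card c₃, k3] at hdB
        exact key c₂ c₃ h23 a₁ a₂ ⟨vA, hvA, hdA⟩ ⟨vB, hvB, hdB⟩ (by omega)
      · obtain ⟨vB, hvB, hdB⟩ := hecc2
        rw [hcs] at hvB
        exact key c₂ c₁ (Ne.symm h12) a₁ (g / 2) ⟨vA, hvA, hdA⟩ ⟨vB, hvB, hdB⟩ (by omega)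
    · -- cstar = c₂, so a₁ = g - 1
      have ha1g : a₁ = g - 1 := by
        rw [hcs, hCs_card c₂, k2] at hncc
        exact hncc
      have hstar2' : 2 ≤ (G.neighborSet x ∩ Cs c₂).ncard := by rw [← hcs]; exact hstar2
      have hE1 : (G.neighborSet x ∩ Cs c₁).ncard ≤ 1 := by omega
      have hE3 : (G.neighborSet x ∩ Cs c₃).ncard ≤ 1 := by omega
      obtain ⟨vA, hvA, hdA⟩ := hecc1 c₁ hE1
      rw [hCs_card c₁, k1] at hdA
      have hdA' : a₁ ≤ G.dist x vA := by omega
      rcases hcond with ⟨hg3', hgr⟩ | hq2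
      · obtain ⟨vB, hvB, hdB⟩ := hecc1 c₃ hE3
        rw [hCs_card c₃, k3] at hdB
        exact key c₁ c₃ h13 a₁ a₂ ⟨vA, hvA, hdA'⟩ ⟨vB, hvB, hdB⟩ (by omega)
      · obtain ⟨vB, hvB, hdB⟩ := hecc2
        rw [hcs] at hvB
        exact key c₁ c₂ h12 a₁ (g / 2) ⟨vA, hvA, hdA'⟩ ⟨vB, hvB, hdB⟩ (by omega)
    · -- cstar = c₃, so a₂ = g - 1
      have ha2g : a₂ = g - 1 := by
        rw [hcs, hCs_card c₃, k3] at hncc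
        exact hncc
      have hstar2' : 2 ≤ (G.neighborSet x ∩ Cs c₃).ncard := by rw [← hcs]; exact hstar2
      have hE1 : (G.neighborSet x ∩ Cs c₁).ncard ≤ 1 := by omega
      have hE2 : (G.neighborSet x ∩ Cs c₂).ncard ≤ 1 := by omega
      obtain ⟨vA, hvA, hdA⟩ := hecc1 c₂ hE2
      rw [hCs_card c₂, k2] at hdA
      rcases hcond with ⟨hg3', hgr⟩ | hq2
      · obtain ⟨vB, hvB, hdB⟩ := hecc1 c₁ hE1
        rw [hCs_card c₁, k1] at hdB
        have hdB' : a₂ ≤ G.dist x vB := by omega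
        exact key c₂ c₁ (Ne.symm h12) a₁ a₂ ⟨vA, hvA, hdA⟩ ⟨vB, hvB, hdB'⟩ (by omega)
      · obtain ⟨vB, hvB, hdB⟩ := hecc2
        rw [hcs] at hvB
        exact key c₂ c₃ h23 a₁ (g / 2) ⟨vA, hvA, hdA⟩ ⟨vB, hvB, hdB⟩ (by omega)
  -- conclude
  obtain ⟨u, v, hfarv⟩ := hfar
  have hnev : Nonempty V := ⟨x⟩
  unfold burningNumber
  obtain ⟨k0, xs0, hxs0⟩ := burn_exists G hconn
  refine le_csInf ⟨k0, xs0, hxs0⟩ ?_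
  rintro k ⟨xs, hxs⟩
  by_contra hlt
  push_neg at hlt
  have hcount := burn_count G hconn (u := u) (v := v) hxs
  have hk : k ≤ q := by omega
  have hpow : k ^ 2 ≤ q ^ 2 := Nat.pow_le_pow_left hk 2
  omega
end
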